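/- Let 𝔠 = {p_r > … > p_0} be a finite chain with positive integer bonds b_1, …, b_r (bond b_i for covering p_i > p_{i−1}), and let Γ_𝔠 = LS_𝔠^+ = LS_𝔠 ∩ ℚ_{≥0}^𝔠 be the LS-monoid. Then every indecomposable element u = Σ_i u_i e_{p_i} of Γ_𝔠 (indecomposable meaning u ≠ 0 and u cannot be written u = a + b with a, b ∈ Γ_𝔠 ∖{0} and min supp a ≥ max supp b) satisfies Σ_i u_i = 1. -/

import Mathlib

open scoped BigOperators

/-- Membership in the LS-lattice of a chain `p_0 < … < p_r` with bonds
`b 0, …, b (r-1)` (where `b k` is the bond of the covering `p_{k+1} > p_k`). -/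
def memLS (r : ℕ) (b : Fin r → ℕ) (a : Fin (r + 1) → ℚ) : Prop :=
  (∀ k : Fin r, ∃ z : ℤ,
      (b k : ℚ) * (∑ j : Fin (r + 1), if (k : ℕ) + 1 ≤ (j : ℕ) then a j else 0) = z) ∧
    ∃ z : ℤ, (∑ j : Fin (r + 1), a j) = z

/-- Membership in the LS-monoid `LS^+ = LS ∩ ℚ_{≥0}`. -/
def memLSplus (r : ℕ) (b : Fin r → ℕ) (a : Fin (r + 1) → ℚ) : Prop :=
  memLS r b a ∧ ∀ j, 0 ≤ a j

/-- every indecomposable element of the LS-monoid `LS_𝔠^+` of a chain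
`𝔠 = {p_r > … > p_0}` with bonds `b` has coordinate sum `1`.  Indecomposable means:
nonzero, and not expressible as `x + y` with `x, y ∈ LS_𝔠^+ ∖ {0}` and
`min supp x ≥ max supp y`. -/
theorem LS_monoid_indecomposable_coord_sum_one (r : ℕ) (b : Fin r → ℕ)
    (hb : ∀ k, 0 < b k) (u : Fin (r + 1) → ℚ)
    (hu : memLSplus r b u) (hu0 : u ≠ 0)
    (hindec : ¬ ∃ x y : Fin (r + 1) → ℚ, memLSplus r b x ∧ memLSplus r b y ∧
      x ≠ 0 ∧ y ≠ 0 ∧ u = x + y ∧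
      ∀ p : Fin (r + 1), x p ≠ 0 → ∀ q : Fin (r + 1), y q ≠ 0 → q ≤ p) :
    ∑ i, u i = 1 := by
  obtain ⟨⟨hbond, S, hS⟩, hpos⟩ := hu
  set Tu : ℕ → ℚ := fun k => ∑ j : Fin (r+1), if k ≤ (j:ℕ) then u j else 0 with hTudef
  have hTu0 : Tu 0 = ∑ j, u j := by simp [hTudef]
  have hTutop : Tu (r+1) = 0 := by
    apply Finset.sum_eq_zero
    intro j _
    have hj := j.2
    have : ¬ (r + 1 ≤ (j:ℕ)) := by omega
    simp [this]
  have hTunonneg : ∀ k, 0 ≤ Tu k := by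
    intro k
    apply Finset.sum_nonneg
    intro j _
    split
    · exact hpos j
    · exact le_refl 0
  have hTurec : ∀ k (hk : k ≤ r), Tu k = u ⟨k, by omega⟩ + Tu (k+1) := by
    intro k hk
    have : ∀ j : Fin (r+1), (if k ≤ (j:ℕ) then u j else 0)
        = (if j = (⟨k, by omega⟩ : Fin (r+1)) then u j else 0)
          + (if k + 1 ≤ (j:ℕ) then u j else 0) := by
      intro j
      rcases lt_trichotomy (j:ℕ) k with h | h | h
      · have h1 : ¬ (k ≤ (j:ℕ)) := by omega
        have h2 : ¬ (k+1 ≤ (j:ℕ)) := by omega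
        have h3 : j ≠ (⟨k, by omega⟩ : Fin (r+1)) := by
          intro hj
          have : (j:ℕ) = k := congrArg Fin.val hj
          omega
        simp [h1, h2, h3]
      · have h1 : k ≤ (j:ℕ) := by omega
        have h2 : ¬ (k+1 ≤ (j:ℕ)) := by omega
        have h3 : j = (⟨k, by omega⟩ : Fin (r+1)) := Fin.ext (by simpa using h)
        simp [h1, h2, h3]
      · have h1 : k ≤ (j:ℕ) := by omega
        have h2 : k+1 ≤ (j:ℕ) := by omega
        have h3 : j ≠ (⟨k, by omega⟩ : Fin (r+1)) := by
          intro hj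
          have : (j:ℕ) = k := congrArg Fin.val hj
          omega
        simp [h1, h2, h3]
    calc Tu k = ∑ j : Fin (r+1), ((if j = (⟨k, by omega⟩ : Fin (r+1)) then u j else 0)
          + (if k + 1 ≤ (j:ℕ) then u j else 0)) := Finset.sum_congr rfl (fun j _ => this j)
    _ = u ⟨k, by omega⟩ + Tu (k+1) := by
        rw [Finset.sum_add_distrib, Finset.sum_ite_eq']
        simp [hTudef]
  -- sum is an integer ≥ 1
  by_contra hne
  have hsum_nonneg : 0 ≤ ∑ j, u j := Finset.sum_nonneg (fun j _ => hpos j)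
  have hSne0 : (∑ j, u j) ≠ 0 := by
    intro h0
    apply hu0
    funext j
    have := (Finset.sum_eq_zero_iff_of_nonneg (fun j _ => hpos j)).mp h0 j (Finset.mem_univ j)
    simpa using this
  have hS1 : (1:ℤ) ≤ S := by
    rw [hS] at hsum_nonneg hSne0
    exact_mod_cast lt_of_le_of_ne hsum_nonneg (Ne.symm (by exact_mod_cast hSne0))
  have hS2 : (2:ℤ) ≤ S := by
    rcases lt_or_eq_of_le hS1 with h | h
    · omega
    · exfalso; apply hne; rw [hS, ← h]; norm_num
  have hS2' : (2:ℚ) ≤ ∑ j, u j := by rw [hS]; exact_mod_cast hS2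
  -- find the splitting index
  set m : ℕ := Nat.findGreatest (fun k => 1 ≤ Tu k) r with hmdef
  have hm_le : m ≤ r := Nat.findGreatest_le r
  have hm1 : 1 ≤ Tu m := by
    have h0 : (fun k => 1 ≤ Tu k) 0 := by show 1 ≤ Tu 0; rw [hTu0]; linarith
    have := Nat.findGreatest_spec (P := fun k => 1 ≤ Tu k) (Nat.zero_le r) h0
    exact this
  have hm2 : Tu (m+1) < 1 := by
    rcases eq_or_lt_of_le hm_le with h | h
    · rw [h, hTutop]; norm_num
    · have := Nat.findGreatest_is_greatest (P := fun k => 1 ≤ Tu k)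
        (Nat.lt_succ_self m) (by omega : m + 1 ≤ r)
      exact lt_of_not_ge this
  set mF : Fin (r+1) := ⟨m, by omega⟩ with hmFdef
  set x : Fin (r+1) → ℚ :=
    fun j => if m < (j:ℕ) then u j else if j = mF then 1 - Tu (m+1) else 0 with hxdef
  set y : Fin (r+1) → ℚ := fun j => u j - x j with hydef
  -- tail sums of x
  have hTx_le : ∀ k, k ≤ m → (∑ j : Fin (r+1), if k ≤ (j:ℕ) then x j else 0) = 1 := by
    intro k hk
    have hpt : ∀ j : Fin (r+1), (if k ≤ (j:ℕ) then x j else 0)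
        = (if j = mF then 1 - Tu (m+1) else 0) + (if m + 1 ≤ (j:ℕ) then u j else 0) := by
      intro j
      rcases lt_trichotomy (j:ℕ) m with h | h | h
      · have h2 : ¬ (m < (j:ℕ)) := by omega
        have h3 : j ≠ mF := Fin.ne_of_val_ne (show (j:ℕ) ≠ m by omega)
        have h4 : ¬ (m+1 ≤ (j:ℕ)) := by omega
        simp [hxdef, h2, h3, h4]
      · have h1 : k ≤ (j:ℕ) := by omega
        have h2 : ¬ (m < (j:ℕ)) := by omega
        have h3 : j = mF := Fin.ext (show (j:ℕ) = (mF:ℕ) from h)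
        have h4 : ¬ (m+1 ≤ (j:ℕ)) := by omega
        rw [h3] at h1 h2 h4
        simp [hxdef, h1, h2, h3, h4, hk]
      · have h1 : k ≤ (j:ℕ) := by omega
        have h2 : m < (j:ℕ) := h
        have h3 : j ≠ mF := Fin.ne_of_val_ne (show (j:ℕ) ≠ m by omega)
        have h4 : m+1 ≤ (j:ℕ) := by omega
        simp [hxdef, h1, h2, h3, h4]
    calc (∑ j : Fin (r+1), if k ≤ (j:ℕ) then x j else 0)
        = ∑ j : Fin (r+1), ((if j = mF then 1 - Tu (m+1) else 0)
            + (if m + 1 ≤ (j:ℕ) then u j else 0)) :=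
          Finset.sum_congr rfl (fun j _ => hpt j)
      _ = (1 - Tu (m+1)) + Tu (m+1) := by
          rw [Finset.sum_add_distrib, Finset.sum_ite_eq']
          simp [hTudef]
      _ = 1 := by ring
  have hTx_gt : ∀ k, m < k → (∑ j : Fin (r+1), if k ≤ (j:ℕ) then x j else 0) = Tu k := by
    intro k hk
    apply Finset.sum_congr rfl
    intro j _
    by_cases h : k ≤ (j:ℕ)
    · have h2 : m < (j:ℕ) := by omega
      simp [hxdef, h, h2]
    · simp [hTudef, h]
  have hTy : ∀ k, (∑ j : Fin (r+1), if k ≤ (j:ℕ) then y j else 0)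
      = Tu k - (∑ j : Fin (r+1), if k ≤ (j:ℕ) then x j else 0) := by
    intro k
    rw [eq_sub_iff_add_eq, ← Finset.sum_add_distrib]
    apply Finset.sum_congr rfl
    intro j _
    by_cases h : k ≤ (j:ℕ) <;> simp [hydef, h]
  -- nonnegativity
  have hxnn : ∀ j, 0 ≤ x j := by
    intro j
    show 0 ≤ if m < (j:ℕ) then u j else if j = mF then 1 - Tu (m+1) else 0
    split
    · exact hpos j
    · split
      · linarith
      · exact le_refl 0
  have hynn : ∀ j, 0 ≤ y j := by
    intro j
    show 0 ≤ u j - (if m < (j:ℕ) then u j else if j = mF then 1 - Tu (m+1) else 0)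
    split
    · simp
    · split
      · rename_i h1 h2
        have hjm : (j:ℕ) = m := congrArg Fin.val h2
        have hum : u j = u ⟨m, by omega⟩ := congrArg u (Fin.ext hjm)
        have := hTurec m hm_le
        rw [hum]
        linarith
      · simpa using hpos j
  -- memberships
  have hxmem : memLSplus r b x := by
    refine ⟨⟨?_, ⟨1, ?_⟩⟩, hxnn⟩
    · intro k
      by_cases h : (k:ℕ) + 1 ≤ m
      · exact ⟨b k, by rw [hTx_le _ h]; simp⟩
      · obtain ⟨z, hz⟩ := hbond k
        exact ⟨z, by rw [hTx_gt _ (by omega)]; exact hz⟩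
    · have := hTx_le 0 (Nat.zero_le m)
      simpa using this
  have hymem : memLSplus r b y := by
    refine ⟨⟨?_, ⟨S - 1, ?_⟩⟩, hynn⟩
    · intro k
      by_cases h : (k:ℕ) + 1 ≤ m
      · obtain ⟨z, hz⟩ := hbond k
        refine ⟨z - b k, ?_⟩
        rw [hTy, hTx_le _ h]
        push_cast
        have : (b k : ℚ) * (∑ j : Fin (r+1), if (k:ℕ)+1 ≤ (j:ℕ) then u j else 0) = z := hz
        rw [hTudef]
        simp only
        linarith [this]
      · refine ⟨0, ?_⟩
        rw [hTy, hTx_gt _ (by omega)]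
        simp
    · have h0 : (∑ j : Fin (r+1), if 0 ≤ (j:ℕ) then y j else 0) = Tu 0 - 1 := by
        rw [hTy, hTx_le 0 (Nat.zero_le m), hTu0, ← hTu0]
      have : (∑ j, y j) = Tu 0 - 1 := by
        rw [← h0]; apply Finset.sum_congr rfl; intro j _; simp
      rw [this, hTu0, hS]
      push_cast
      ring
  -- nonzeroness
  have hxsum : (∑ j, x j) = 1 := by
    have := hTx_le 0 (Nat.zero_le m)
    rw [← this]; apply Finset.sum_congr rfl; intro j _; simp
  have hx0 : x ≠ 0 := by
    intro h; rw [h] at hxsum; simp at hxsum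
  have hysum : (∑ j, y j) = (S:ℚ) - 1 := by
    have h0 := hTy 0
    rw [hTx_le 0 (Nat.zero_le m), hTu0, hS] at h0
    rw [← h0]; apply Finset.sum_congr rfl; intro j _; simp
  have hy0 : y ≠ 0 := by
    intro h
    rw [h] at hysum
    simp at hysum
    have : (S:ℚ) = 1 := by linarith
    have : S = 1 := by exact_mod_cast this
    omega
  apply hindec
  refine ⟨x, y, hxmem, hymem, hx0, hy0, ?_, ?_⟩
  · funext j; simp [hydef]
  · intro p hp q hq
    have hpm : m ≤ (p:ℕ) := by
      by_contra hc
      apply hp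
      have h1 : ¬ (m < (p:ℕ)) := by omega
      have h2 : p ≠ mF := Fin.ne_of_val_ne (show (p:ℕ) ≠ m by omega)
      simp [hxdef, h1, h2]
    have hqm : (q:ℕ) ≤ m := by
      by_contra hc
      apply hq
      have h1 : m < (q:ℕ) := by omega
      simp [hydef, hxdef, h1]
    exact Fin.le_def.mpr (by omega)
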